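/- For every c ∈ ℤ with −3 ≤ c ≤ 3 and all α, β ∈ R: if α = c + τ²·β in R and Q(α) > 18, then Q(β) < Q(α). -/

import Mathlib

open Polynomial

noncomputable def P (μ : ℤ) : ℤ[X] := X ^ 4 - C μ * X ^ 3 - C (2 * μ) * X + 4

noncomputable abbrev Rg (μ : ℤ) := AdjoinRoot (P μ)

noncomputable def tau (μ : ℤ) : Rg μ := AdjoinRoot.root (P μ)

noncomputable def Q (μ : ℤ) (α : Rg μ) : ℝ :=
  (1 / 2) * (((P μ).map (Int.castRingHom ℂ)).roots.attach.map
    (fun z => ‖AdjoinRoot.lift (Int.castRingHom ℂ) z.1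
      (by
        have h2 : Polynomial.eval z.1 ((P μ).map (Int.castRingHom ℂ)) = 0 :=
          (Polynomial.mem_roots'.mp z.2).2
        rwa [Polynomial.eval_map] at h2) α‖ ^ 2)).sum

lemma quad_normSq (t : ℝ) (ht : t^2 < 8) (z : ℂ) (hz : z^2 - t*z + 2 = 0) :
    Complex.normSq z = 2 := by
  rw [sq] at hz
  rw [Complex.ext_iff] at hz
  obtain ⟨h1, h2⟩ := hz
  simp [Complex.mul_re, Complex.mul_im] at h1 h2
  set x := z.re; set y := z.im
  rcases eq_or_ne y 0 with hy | hy
  · exfalso; rw [hy] at h1; nlinarith [sq_nonneg (2*x - t)]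
  · have ht' : 2*x - t = 0 := by
      rcases mul_eq_zero.mp (show y * (2*x - t) = 0 by linear_combination h2) with h | h
      · exact absurd h hy
      · exact h
    rw [Complex.normSq_apply]
    linear_combination -h1 + x*ht'

lemma root_normSq (μ : ℤ) (hμ : μ = 1 ∨ μ = -1) (z : ℂ)
    (hz : z^4 - (μ:ℂ)*z^3 - 2*(μ:ℂ)*z + 4 = 0) : Complex.normSq z = 2 := by
  have hμ2 : (μ:ℝ)^2 = 1 := by rcases hμ with h | h <;> simp [h]
  set s17 : ℝ := Real.sqrt 17 with hs17
  have hsnn : 0 ≤ s17 := Real.sqrt_nonneg _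
  have hssq : s17^2 = 17 := Real.sq_sqrt (by norm_num)
  set a : ℝ := ((μ:ℝ) + s17)/2 with ha
  set b : ℝ := ((μ:ℝ) - s17)/2 with hb
  have hab : a + b = (μ:ℝ) := by rw [ha, hb]; ring
  have habm : a * b = -4 := by rw [ha, hb]; nlinarith
  have ha8 : a^2 < 8 := by rw [ha]; nlinarith [sq_nonneg (s17 - 7)]
  have hb8 : b^2 < 8 := by rw [hb]; nlinarith [sq_nonneg (s17 - 7)]
  have hA : (a:ℂ) + (b:ℂ) = (μ:ℂ) := by exact_mod_cast congrArg Complex.ofReal hab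
  have hAB : (a:ℂ) * (b:ℂ) = -4 := by exact_mod_cast congrArg Complex.ofReal habm
  have hfac : (z^2 - (a:ℂ)*z + 2) * (z^2 - (b:ℂ)*z + 2) = 0 := by
    linear_combination hz + (-(z^3) - 2*z) * hA + z^2 * hAB
  rcases mul_eq_zero.mp hfac with h | h
  · exact quad_normSq a ha8 z h
  · exact quad_normSq b hb8 z h


lemma P_monic (μ : ℤ) : (P μ).Monic := by unfold P; monicity!

lemma P_natDegree (μ : ℤ) : (P μ).natDegree = 4 := by unfold P; compute_degree!

lemma cardRootsP (μ : ℤ) :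
    Multiset.card ((P μ).map (Int.castRingHom ℂ)).roots = 4 := by
  have h1 : ((P μ).map (Int.castRingHom ℂ)).natDegree = 4 := by
    rw [(P_monic μ).natDegree_map, P_natDegree]
  rw [← h1]
  exact (Polynomial.splits_iff_card_roots.mp (IsAlgClosed.splits _))

lemma pointwise (μ : ℤ) (hμ : μ = 1 ∨ μ = -1) (c : ℤ) (hc1 : -3 ≤ c) (hc2 : c ≤ 3)
    (α β : Rg μ) (h : α = (c : Rg μ) + tau μ ^ 2 * β) (z : ℂ)
    (hz : (P μ).eval₂ (Int.castRingHom ℂ) z = 0) :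
    ‖AdjoinRoot.lift (Int.castRingHom ℂ) z hz β‖^2
      ≤ ‖AdjoinRoot.lift (Int.castRingHom ℂ) z hz α‖^2 / 2 + 9/2 := by
  set φ := AdjoinRoot.lift (Int.castRingHom ℂ) z hz with hφ
  have hz4 : z^4 - (μ:ℂ)*z^3 - 2*(μ:ℂ)*z + 4 = 0 := by
    have h' := hz
    have hmu : Polynomial.eval₂ (Int.castRingHom ℂ) z ((μ:ℤ[X])) = (μ:ℂ) := by
      rw [← Polynomial.C_eq_intCast, eval₂_C]; simp
    simp [P, eval₂_sub, eval₂_mul, eval₂_pow, eval₂_C, eval₂_X, hmu] at h'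
    linear_combination h'
  have nq : Complex.normSq z = 2 := root_normSq μ hμ z hz4
  have hφα : φ α = (c:ℂ) + z^2 * φ β := by
    rw [h]; rw [map_add, map_mul, map_pow, map_intCast]
    rw [show tau μ = AdjoinRoot.root (P μ) from rfl, hφ, AdjoinRoot.lift_root]
  have hznorm : ‖z‖^2 = 2 := by
    rw [Complex.sq_norm, nq]
  have hsub : z^2 * φ β = φ α - (c:ℂ) := by rw [hφα]; ring
  have hcb : ‖(c:ℂ)‖ ≤ 3 := by
    rw [show ((c:ℂ)) = (((c:ℝ)):ℂ) by push_cast; ring, Complex.norm_real,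
      Real.norm_eq_abs, abs_le]
    constructor <;> [exact_mod_cast hc1; exact_mod_cast hc2]
  have h2B : 2 * ‖φ β‖ ≤ ‖φ α‖ + 3 :=
    calc 2 * ‖φ β‖ = ‖z^2 * φ β‖ := by rw [norm_mul, norm_pow, hznorm]
      _ = ‖φ α - (c:ℂ)‖ := by rw [hsub]
      _ ≤ ‖φ α‖ + ‖(c:ℂ)‖ := norm_sub_le _ _
      _ ≤ ‖φ α‖ + 3 := by linarith
  nlinarith [norm_nonneg (φ β), norm_nonneg (φ α), sq_nonneg (‖φ α‖ - 3)]

/-- Norm decrease step for the GLS expansion (case of two steps): if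
`α = c + τ²·β` with an integer digit `−3 ≤ c ≤ 3` and `Q(α) > 18`,
then `Q(β) < Q(α)`. -/
theorem stmt18 (μ : ℤ) (hμ : μ = 1 ∨ μ = -1) (c : ℤ) (hc1 : -3 ≤ c) (hc2 : c ≤ 3)
    (α β : Rg μ) (h : α = (c : Rg μ) + tau μ ^ 2 * β) (hQ : Q μ α > 18) :
    Q μ β < Q μ α := by
  simp only [Q] at hQ ⊢
  set s := ((P μ).map (Int.castRingHom ℂ)).roots with hs
  set Fα : {z // z ∈ s} → ℝ := fun z => ‖AdjoinRoot.lift (Int.castRingHom ℂ) z.1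
      (by
        have h2 : Polynomial.eval z.1 ((P μ).map (Int.castRingHom ℂ)) = 0 :=
          (Polynomial.mem_roots'.mp z.2).2
        rwa [Polynomial.eval_map] at h2) α‖ ^ 2 with hFα
  have hle : (s.attach.map (fun z => ‖AdjoinRoot.lift (Int.castRingHom ℂ) z.1
      (by
        have h2 : Polynomial.eval z.1 ((P μ).map (Int.castRingHom ℂ)) = 0 :=
          (Polynomial.mem_roots'.mp z.2).2
        rwa [Polynomial.eval_map] at h2) β‖ ^ 2)).sum
      ≤ (s.attach.map (fun z => Fα z / 2 + 9/2)).sum := by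
    apply Multiset.sum_map_le_sum_map
    intro z hzz
    exact pointwise μ hμ c hc1 hc2 α β h z.1 _
  have e1 : (s.attach.map (fun z => Fα z / 2 + 9/2)).sum
      = (s.attach.map Fα).sum / 2 + 18 := by
    rw [show (fun z => Fα z / 2 + 9/2) = (fun z => 2⁻¹ * Fα z + (9:ℝ)/2) from by
      funext z; ring]
    have hcard : Multiset.card s = 4 := cardRootsP μ
    rw [Multiset.sum_map_add, Multiset.sum_map_mul_left, Multiset.map_const',
      Multiset.card_attach, hcard, Multiset.sum_replicate]

    ring
  rw [e1] at hle
  linarith
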